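/- Let H = ℓ²(ℕ), let (e_n) be its canonical orthonormal basis, α > 0, and β_n = (1+n)^{-(α+1/2)}. Consider the H-valued Hankel matrix X = [β_{m+n} e_{m+n}]_{m,n≥0} acting from ℓ²(ℕ) to ℓ²(ℕ, H). Then X·diag((1+n)^α) is bounded with ‖X diag((1+n)^α)‖² = sup_n (1+n)^{2α} ∑_{k≥n} (1+k)^{-(2α+1)} < ∞, while diag applied on the other side is unbounded: sup_k ∑_{n≥0} (1+n)^{2α}(1+n+k)^{-(2α+1)} = ∞, so D^α X (multiplying the n-th row block by (1+n)^α) is unbounded. -/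

import Mathlib

open scoped ENNReal


-- MVT-type inequality
lemma mvt_ineq {s x : ℝ} (hs : 0 < s) (hx : 1 ≤ x) :
    s * (x + 1) ^ (-(s + 1)) ≤ x ^ (-s) - (x + 1) ^ (-s) := by
  have hx0 : (0:ℝ) < x := by linarith
  have hx1 : (0:ℝ) < x + 1 := by linarith
  have hlog : 1 / (x + 1) ≤ Real.log ((x + 1) / x) := by
    have h := Real.log_le_sub_one_of_pos (show (0:ℝ) < x / (x + 1) by positivity)
    rw [Real.log_div (by positivity) (by positivity)] at h
    rw [Real.log_div (by positivity) (by positivity)]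
    have h2 : x / (x + 1) - 1 = -(1 / (x + 1)) := by field_simp; ring
    rw [h2] at h; linarith
  have hexp : 1 + s * (1 / (x + 1)) ≤ ((x + 1) / x) ^ s := by
    rw [Real.rpow_def_of_pos (by positivity)]
    have h1 : s * Real.log ((x + 1) / x) + 1 ≤ Real.exp (s * Real.log ((x + 1) / x)) :=
      Real.add_one_le_exp _
    have h2 : s * (1 / (x + 1)) ≤ s * Real.log ((x + 1) / x) :=
      mul_le_mul_of_nonneg_left hlog hs.le
    rw [mul_comm (Real.log _)]
    linarith
  have hA : (0:ℝ) < x ^ s := Real.rpow_pos_of_pos hx0 s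
  have hB : (0:ℝ) < (x + 1) ^ s := Real.rpow_pos_of_pos hx1 s
  rw [Real.div_rpow hx1.le hx0.le] at hexp
  have hABle : x ^ s * (1 + s * (1 / (x + 1))) ≤ (x + 1) ^ s := by
    calc x ^ s * (1 + s * (1 / (x + 1))) ≤ x ^ s * ((x + 1) ^ s / x ^ s) :=
          mul_le_mul_of_nonneg_left hexp hA.le
      _ = (x + 1) ^ s := by field_simp
  have hu : (1 / (x + 1)) * (x + 1) = 1 := by field_simp
  have h5 : s * x ^ s ≤ ((x + 1) ^ s - x ^ s) * (x + 1) := by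
    have hm := mul_le_mul_of_nonneg_right hABle hx1.le
    have hveq : x ^ s * (1 + s * (1 / (x + 1))) * (x + 1) = x ^ s * (x + 1) + s * x ^ s := by
      field_simp
    rw [hveq] at hm; nlinarith
  have e1 : x ^ (-s) = (x ^ s)⁻¹ := Real.rpow_neg hx0.le s
  have e2 : (x + 1) ^ (-s) = ((x + 1) ^ s)⁻¹ := Real.rpow_neg hx1.le s
  have e3 : (x + 1) ^ (-(s + 1)) = ((x + 1) ^ s * (x + 1))⁻¹ := by
    rw [Real.rpow_neg hx1.le, Real.rpow_add hx1, Real.rpow_one]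
  rw [e1, e2, e3, inv_eq_one_div, inv_eq_one_div, inv_eq_one_div, mul_one_div,
    div_sub_div _ _ (ne_of_gt hA) (ne_of_gt hB), div_le_div_iff₀ (by positivity) (by positivity)]
  nlinarith [mul_le_mul_of_nonneg_right h5 hB.le]

-- telescoping sum bound
lemma tele_sum {s : ℝ} (hs : 0 < s) (m : ℕ) (hm : 1 ≤ m) (N : ℕ) :
    ∑ k ∈ Finset.range N, ((m : ℝ) + k + 1) ^ (-(s + 1))
      ≤ (1 / s) * ((m : ℝ) ^ (-s) - ((m : ℝ) + N) ^ (-s)) := by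
  induction N with
  | zero => simp
  | succ N ih =>
    rw [Finset.sum_range_succ]
    have hm' : (1:ℝ) ≤ (m : ℝ) := by exact_mod_cast hm
    have hx : (1:ℝ) ≤ (m : ℝ) + N := by
      have : (0:ℝ) ≤ (N:ℝ) := Nat.cast_nonneg N
      linarith
    have hmvt := mvt_ineq hs hx
    have hlast : ((m : ℝ) + N + 1) ^ (-(s + 1))
        ≤ (1 / s) * (((m : ℝ) + N) ^ (-s) - ((m : ℝ) + N + 1) ^ (-s)) := by
      have h1 := mul_le_mul_of_nonneg_left hmvt (le_of_lt (one_div_pos.2 hs))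
      have h2 : (1 / s) * (s * ((m : ℝ) + N + 1) ^ (-(s + 1)))
          = ((m : ℝ) + N + 1) ^ (-(s + 1)) := by field_simp
      linarith
    have hcast : ((m : ℝ) + (N + 1 : ℕ)) = (m : ℝ) + N + 1 := by push_cast; ring
    rw [hcast]
    calc ∑ k ∈ Finset.range N, ((m : ℝ) + k + 1) ^ (-(s + 1)) + ((m : ℝ) + N + 1) ^ (-(s + 1))
        ≤ (1 / s) * ((m : ℝ) ^ (-s) - ((m : ℝ) + N) ^ (-s))
          + (1 / s) * (((m : ℝ) + N) ^ (-s) - ((m : ℝ) + N + 1) ^ (-s)) := add_le_add ih hlast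
      _ = (1 / s) * ((m : ℝ) ^ (-s) - ((m : ℝ) + N + 1) ^ (-s)) := by ring

lemma tail_bound {s : ℝ} (hs : 0 < s) (n : ℕ) :
    ∑' k : ℕ, (1 + ((n : ℝ) + k)) ^ (-(s + 1))
      ≤ (1 + (n : ℝ)) ^ (-(s + 1)) + (1 / s) * (1 + (n : ℝ)) ^ (-s) := by
  have hn1 : (0:ℝ) < 1 + (n:ℝ) := by positivity
  apply Real.tsum_le_of_sum_range_le (fun k => Real.rpow_nonneg (by positivity) _)
  intro N
  cases N with
  | zero =>
    simp only [Finset.range_zero, Finset.sum_empty]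
    positivity
  | succ M =>
    rw [Finset.sum_range_succ']
    have h0 : (1 + ((n:ℝ) + (0:ℕ))) ^ (-(s + 1)) = (1 + (n:ℝ)) ^ (-(s + 1)) := by norm_num
    have hcast : ((n + 1 : ℕ) : ℝ) = 1 + (n : ℝ) := by push_cast; ring
    have htail : ∑ k ∈ Finset.range M, (1 + ((n:ℝ) + ((k + 1 : ℕ) : ℝ))) ^ (-(s + 1))
        ≤ (1 / s) * (1 + (n:ℝ)) ^ (-s) := by
      calc ∑ k ∈ Finset.range M, (1 + ((n:ℝ) + ((k + 1 : ℕ) : ℝ))) ^ (-(s + 1))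
          = ∑ k ∈ Finset.range M, (((n + 1 : ℕ) : ℝ) + k + 1) ^ (-(s + 1)) := by
            refine Finset.sum_congr rfl fun k _ => ?_
            congr 1
            push_cast; ring
        _ ≤ (1 / s) * (((n + 1 : ℕ) : ℝ) ^ (-s) - (((n + 1 : ℕ) : ℝ) + M) ^ (-s)) :=
            tele_sum hs (n + 1) (Nat.le_add_left 1 n) M
        _ ≤ (1 / s) * (((n + 1 : ℕ) : ℝ) ^ (-s)) := by
            have hpos : (0:ℝ) ≤ (((n + 1 : ℕ) : ℝ) + M) ^ (-s) :=
              Real.rpow_nonneg (by positivity) _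
            have h1s : (0:ℝ) ≤ 1 / s := by positivity
            nlinarith
        _ = (1 / s) * (1 + (n:ℝ)) ^ (-s) := by rw [hcast]
    rw [h0]
    linarith [htail]

lemma summable_tail {s : ℝ} (hs : 0 < s) (n : ℕ) :
    Summable (fun k : ℕ => (1 + ((n : ℝ) + k)) ^ (-(s + 1))) := by
  have h : Summable (fun m : ℕ => (m : ℝ) ^ (-(s + 1))) :=
    Real.summable_nat_rpow.2 (by linarith)
  have h2 := (summable_nat_add_iff (n + 1)).2 h
  refine h2.congr fun k => ?_
  congr 1
  push_cast; ring

lemma sup_term_bound {α : ℝ} (hα : 0 < α) (n : ℕ) :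
    ENNReal.ofReal ((1 + n : ℝ) ^ (2 * α)) *
        ∑' k : ℕ, ENNReal.ofReal ((1 + (n + k) : ℝ) ^ (-(2 * α + 1)))
      ≤ ENNReal.ofReal (1 + 1 / (2 * α)) := by
  have hs : 0 < 2 * α := by positivity
  have hn1 : (0:ℝ) < 1 + (n:ℝ) := by positivity
  rw [← ENNReal.ofReal_tsum_of_nonneg (fun k => Real.rpow_nonneg (by positivity) _)
    (summable_tail hs n)]
  rw [← ENNReal.ofReal_mul (Real.rpow_nonneg hn1.le _)]
  apply ENNReal.ofReal_le_ofReal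
  have htb := tail_bound hs n
  have hb : (0:ℝ) ≤ (1 + (n:ℝ)) ^ (2 * α) := Real.rpow_nonneg hn1.le _
  have e1 : (1 + (n:ℝ)) ^ (2 * α) * (1 + (n:ℝ)) ^ (-(2 * α + 1)) = (1 + (n:ℝ)) ^ (-1 : ℝ) := by
    rw [← Real.rpow_add hn1]; norm_num
  have e2 : (1 + (n:ℝ)) ^ (2 * α) * (1 + (n:ℝ)) ^ (-(2 * α)) = 1 := by
    rw [← Real.rpow_add hn1]; norm_num
  have e3 : (1 + (n:ℝ)) ^ (-1 : ℝ) ≤ 1 :=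
    Real.rpow_le_one_of_one_le_of_nonpos (by linarith) (by norm_num)
  calc (1 + (n:ℝ)) ^ (2 * α) * ∑' k : ℕ, (1 + ((n:ℝ) + k)) ^ (-(2 * α + 1))
      ≤ (1 + (n:ℝ)) ^ (2 * α) *
          ((1 + (n:ℝ)) ^ (-(2 * α + 1)) + (1 / (2 * α)) * (1 + (n:ℝ)) ^ (-(2 * α))) :=
        mul_le_mul_of_nonneg_left htb hb
    _ = (1 + (n:ℝ)) ^ (2 * α) * (1 + (n:ℝ)) ^ (-(2 * α + 1))
        + (1 / (2 * α)) * ((1 + (n:ℝ)) ^ (2 * α) * (1 + (n:ℝ)) ^ (-(2 * α))) := by ring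
    _ = (1 + (n:ℝ)) ^ (-1 : ℝ) + (1 / (2 * α)) * 1 := by rw [e1, e2]
    _ ≤ 1 + 1 / (2 * α) := by linarith

/-- With `β_n = (1+n)^{-(α+1/2)}` and the vector Hankel matrix `X = [β_{m+n} e_{m+n}]`,
the operator `X · diag((1+n)^α)` is bounded, with squared norm
`sup_n (1+n)^{2α} ∑_{k≥n} (1+k)^{-(2α+1)} < ∞` (the columns being pairwise orthogonal,
the squared norm of `X diag((1+n)^α) c` is dominated by this supremum times `∑ |c_n|²`,
with equality on basis vectors), while `diag((1+n)^α) · X` is unbounded: each of its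
columns has infinite norm, `∑_n (1+n)^{2α} (1+n+k)^{-(2α+1)} = ∞`. -/
theorem stmt_11 (α : ℝ) (hα : 0 < α) :
    -- the supremum giving the squared norm of `X D^α` is finite
    (⨆ n : ℕ, ENNReal.ofReal ((1 + n : ℝ) ^ (2 * α)) *
        ∑' k : ℕ, ENNReal.ofReal ((1 + (n + k) : ℝ) ^ (-(2 * α + 1)))) < ⊤
    ∧ -- boundedness of `X D^α`: entry of `X diag((1+n)^α) c` at `(m, j)` is
      -- `β_j (1+(j-m))^α c_{j-m}` if `m ≤ j`, and `0` otherwise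
      (∀ c : ℕ → ℂ,
        ∑' p : ℕ × ℕ,
            ENNReal.ofReal
              (‖(if p.1 ≤ p.2 then
                  (((1 + p.2 : ℝ) ^ (-(α + 1 / 2)) * (1 + (p.2 - p.1) : ℝ) ^ α : ℝ) : ℂ) *
                    c (p.2 - p.1)
                else 0)‖ ^ 2)
          ≤ (⨆ n : ℕ, ENNReal.ofReal ((1 + n : ℝ) ^ (2 * α)) *
                ∑' k : ℕ, ENNReal.ofReal ((1 + (n + k) : ℝ) ^ (-(2 * α + 1)))) *
              ∑' n : ℕ, ENNReal.ofReal (‖c n‖ ^ 2))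
    ∧ -- the squared norm of `X D^α` on the basis vector `e_n` is exactly the supremand
      (∀ n : ℕ,
        ∑' m : ℕ,
            ENNReal.ofReal
              ((1 + (m + n) : ℝ) ^ (-(2 * α + 1)) * (1 + n : ℝ) ^ (2 * α))
          = ENNReal.ofReal ((1 + n : ℝ) ^ (2 * α)) *
              ∑' k : ℕ, ENNReal.ofReal ((1 + (n + k) : ℝ) ^ (-(2 * α + 1))))
    ∧ -- unboundedness of `D^α X`: each column has infinite `ℓ²`-norm
      (∀ k : ℕ,
        ∑' n : ℕ,
            ENNReal.ofReal ((1 + n : ℝ) ^ (2 * α) * (1 + (n + k) : ℝ) ^ (-(2 * α + 1)))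
          = ⊤) := by
  refine ⟨?_, ?_, ?_, ?_⟩
  · -- Part 1
    exact lt_of_le_of_lt (iSup_le fun n => sup_term_bound hα n) ENNReal.ofReal_lt_top
  · -- Part 2
    intro c
    have hinj : Function.Injective (fun q : ℕ × ℕ => (q.1, q.1 + q.2)) := by
      rintro ⟨a1, a2⟩ ⟨b1, b2⟩ h
      simp only [Prod.mk.injEq] at h
      obtain ⟨h1, h2⟩ := h
      subst h1
      simp only [Nat.add_right_cancel_iff, Nat.add_left_cancel_iff] at h2
      simp [h2]
    have heq := Function.Injective.tsum_eq hinj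
      (f := fun p : ℕ × ℕ =>
        ENNReal.ofReal
          (‖(if p.1 ≤ p.2 then
              (((1 + p.2 : ℝ) ^ (-(α + 1 / 2)) * (1 + (p.2 - p.1) : ℝ) ^ α : ℝ) : ℂ) *
                c (p.2 - p.1)
            else 0)‖ ^ 2))
      (by
        rintro ⟨m, j⟩ hp
        by_cases h : m ≤ j
        · exact ⟨(m, j - m), by simp [Nat.add_sub_cancel' h]⟩
        · exfalso
          apply hp
          simp [h])
    rw [← heq]
    have hterm : ∀ q : ℕ × ℕ,
        (fun p : ℕ × ℕ =>
          ENNReal.ofReal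
            (‖(if p.1 ≤ p.2 then
                (((1 + p.2 : ℝ) ^ (-(α + 1 / 2)) * (1 + (p.2 - p.1) : ℝ) ^ α : ℝ) : ℂ) *
                  c (p.2 - p.1)
              else 0)‖ ^ 2)) (q.1, q.1 + q.2)
        = ENNReal.ofReal ((1 + ((q.1 + q.2 : ℕ) : ℝ)) ^ (-(2 * α + 1))) *
            (ENNReal.ofReal ((1 + (q.2 : ℝ)) ^ (2 * α)) * ENNReal.ofReal (‖c q.2‖ ^ 2)) := by
      rintro ⟨m, n⟩
      simp only
      rw [if_pos (Nat.le_add_right m n), Nat.add_sub_cancel_left]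
      have hcast : ((m + n : ℕ) : ℝ) - (m : ℝ) = (n : ℝ) := by push_cast; ring
      rw [hcast]
      have hp1 : (0:ℝ) < 1 + ((m + n : ℕ) : ℝ) := by positivity
      have hp2 : (0:ℝ) < 1 + (n : ℝ) := by positivity
      have hr1 : (0:ℝ) ≤ (1 + ((m + n : ℕ) : ℝ)) ^ (-(α + 1 / 2)) := Real.rpow_nonneg hp1.le _
      have hr2 : (0:ℝ) ≤ (1 + (n : ℝ)) ^ α := Real.rpow_nonneg hp2.le _
      have hnorm : ‖((((1 + ((m + n : ℕ) : ℝ)) ^ (-(α + 1 / 2)) * (1 + (n : ℝ)) ^ α : ℝ)) : ℂ) *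
          c n‖ ^ 2
          = ((1 + ((m + n : ℕ) : ℝ)) ^ (-(α + 1 / 2))) ^ 2 * ((1 + (n : ℝ)) ^ α) ^ 2 *
            ‖c n‖ ^ 2 := by
        rw [norm_mul, Complex.norm_real, Real.norm_eq_abs,
          abs_of_nonneg (mul_nonneg hr1 hr2)]
        ring
      have hsq1 : ((1 + ((m + n : ℕ) : ℝ)) ^ (-(α + 1 / 2))) ^ 2
          = (1 + ((m + n : ℕ) : ℝ)) ^ (-(2 * α + 1)) := by
        rw [sq, ← Real.rpow_add hp1]
        congr 1
        ring
      have hsq2 : ((1 + (n : ℝ)) ^ α) ^ 2 = (1 + (n : ℝ)) ^ (2 * α) := by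
        rw [sq, ← Real.rpow_add hp2]
        congr 1
        ring
      rw [hnorm, hsq1, hsq2, ENNReal.ofReal_mul (by positivity),
        ENNReal.ofReal_mul (Real.rpow_nonneg hp1.le _), mul_assoc]
    have hSn : ∀ n : ℕ,
        ENNReal.ofReal ((1 + (n : ℝ)) ^ (2 * α)) *
          ∑' m : ℕ, ENNReal.ofReal ((1 + ((m + n : ℕ) : ℝ)) ^ (-(2 * α + 1)))
        ≤ ⨆ n : ℕ, ENNReal.ofReal ((1 + n : ℝ) ^ (2 * α)) *
            ∑' k : ℕ, ENNReal.ofReal ((1 + (n + k) : ℝ) ^ (-(2 * α + 1))) := by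
      intro n
      have hrw : ∑' m : ℕ, ENNReal.ofReal ((1 + ((m + n : ℕ) : ℝ)) ^ (-(2 * α + 1)))
          = ∑' k : ℕ, ENNReal.ofReal ((1 + ((n:ℝ) + k)) ^ (-(2 * α + 1))) := by
        refine tsum_congr fun m => ?_
        congr 2
        push_cast
        ring
      rw [hrw]
      exact le_iSup (fun n : ℕ => ENNReal.ofReal ((1 + n : ℝ) ^ (2 * α)) *
        ∑' k : ℕ, ENNReal.ofReal ((1 + (n + k) : ℝ) ^ (-(2 * α + 1)))) n
    calc ∑' q : ℕ × ℕ,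
          (fun p : ℕ × ℕ =>
            ENNReal.ofReal
              (‖(if p.1 ≤ p.2 then
                  (((1 + p.2 : ℝ) ^ (-(α + 1 / 2)) * (1 + (p.2 - p.1) : ℝ) ^ α : ℝ) : ℂ) *
                    c (p.2 - p.1)
                else 0)‖ ^ 2)) (q.1, q.1 + q.2)
        = ∑' q : ℕ × ℕ, ENNReal.ofReal ((1 + ((q.1 + q.2 : ℕ) : ℝ)) ^ (-(2 * α + 1))) *
            (ENNReal.ofReal ((1 + (q.2 : ℝ)) ^ (2 * α)) * ENNReal.ofReal (‖c q.2‖ ^ 2)) :=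
          tsum_congr hterm
      _ = ∑' m : ℕ, ∑' n : ℕ, ENNReal.ofReal ((1 + ((m + n : ℕ) : ℝ)) ^ (-(2 * α + 1))) *
            (ENNReal.ofReal ((1 + (n : ℝ)) ^ (2 * α)) * ENNReal.ofReal (‖c n‖ ^ 2)) :=
          ENNReal.tsum_prod'
      _ = ∑' n : ℕ, ∑' m : ℕ, ENNReal.ofReal ((1 + ((m + n : ℕ) : ℝ)) ^ (-(2 * α + 1))) *
            (ENNReal.ofReal ((1 + (n : ℝ)) ^ (2 * α)) * ENNReal.ofReal (‖c n‖ ^ 2)) :=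
          ENNReal.tsum_comm
      _ = ∑' n : ℕ, (ENNReal.ofReal ((1 + (n : ℝ)) ^ (2 * α)) *
            ∑' m : ℕ, ENNReal.ofReal ((1 + ((m + n : ℕ) : ℝ)) ^ (-(2 * α + 1)))) *
            ENNReal.ofReal (‖c n‖ ^ 2) := by
          refine tsum_congr fun n => ?_
          rw [ENNReal.tsum_mul_right]
          ring
      _ ≤ ∑' n : ℕ, (⨆ n : ℕ, ENNReal.ofReal ((1 + n : ℝ) ^ (2 * α)) *
            ∑' k : ℕ, ENNReal.ofReal ((1 + (n + k) : ℝ) ^ (-(2 * α + 1)))) *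
            ENNReal.ofReal (‖c n‖ ^ 2) :=
          ENNReal.tsum_le_tsum fun n => mul_le_mul_left (hSn n) _
      _ = _ := ENNReal.tsum_mul_left
  · -- Part 3
    intro n
    rw [← ENNReal.tsum_mul_left]
    refine tsum_congr fun m => ?_
    rw [← ENNReal.ofReal_mul (Real.rpow_nonneg (by positivity : (0:ℝ) ≤ 1 + (n:ℝ)) _)]
    congr 1
    have hb : (1 : ℝ) + ((n:ℝ) + m) = 1 + ((m:ℝ) + n) := by ring
    rw [hb, mul_comm]
  · -- Part 4
    intro k
    have hv : (0:ℝ) < 1 + (k:ℝ) := by positivity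
    have hcpos : (0:ℝ) < (1 + (k:ℝ)) ^ (-(2 * α)) := Real.rpow_pos_of_pos hv _
    have hdiv : ∑' n : ℕ, ENNReal.ofReal ((1 + ((n:ℝ) + k))⁻¹) = ⊤ := by
      have hns : ¬ Summable (fun n : ℕ => (1 + ((n:ℝ) + k))⁻¹) := by
        intro h
        have h2 : Summable (fun n : ℕ => ((n + (k + 1) : ℕ) : ℝ)⁻¹) :=
          h.congr fun n => by push_cast; ring_nf
        exact Real.not_summable_natCast_inv ((summable_nat_add_iff (k + 1)).1 h2)
      refine ENNReal.tsum_coe_eq_top_iff_not_summable_coe.2 fun hsum => hns ?_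
      exact hsum.congr fun n => Real.coe_toNNReal _ (by positivity)
    have hpt : ∀ n : ℕ, ENNReal.ofReal ((1 + (k:ℝ)) ^ (-(2 * α))) *
        ENNReal.ofReal ((1 + ((n:ℝ) + k))⁻¹)
        ≤ ENNReal.ofReal ((1 + (n:ℝ)) ^ (2 * α) * (1 + ((n:ℝ) + k)) ^ (-(2 * α + 1))) := by
      intro n
      rw [← ENNReal.ofReal_mul hcpos.le]
      apply ENNReal.ofReal_le_ofReal
      have hw : (0:ℝ) < 1 + ((n:ℝ) + k) := by positivity
      have hu : (0:ℝ) < 1 + (n:ℝ) := by positivity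
      have hs2 : (0:ℝ) ≤ 2 * α := by positivity
      have hwle : 1 + ((n:ℝ) + k) ≤ (1 + (n:ℝ)) * (1 + (k:ℝ)) := by
        nlinarith [Nat.cast_nonneg (α := ℝ) n, Nat.cast_nonneg (α := ℝ) k]
      have h1 : (1 + ((n:ℝ) + k)) ^ (2 * α) ≤ (1 + (n:ℝ)) ^ (2 * α) * (1 + (k:ℝ)) ^ (2 * α) := by
        calc (1 + ((n:ℝ) + k)) ^ (2 * α) ≤ ((1 + (n:ℝ)) * (1 + (k:ℝ))) ^ (2 * α) :=
              Real.rpow_le_rpow hw.le hwle hs2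
          _ = _ := Real.mul_rpow hu.le hv.le
      have hwp : (0:ℝ) < (1 + ((n:ℝ) + k)) ^ (2 * α) := Real.rpow_pos_of_pos hw _
      have hvp : (0:ℝ) < (1 + (k:ℝ)) ^ (2 * α) := Real.rpow_pos_of_pos hv _
      have hup : (0:ℝ) < (1 + (n:ℝ)) ^ (2 * α) := Real.rpow_pos_of_pos hu _
      have key : (1 + (k:ℝ)) ^ (-(2 * α))
          ≤ (1 + (n:ℝ)) ^ (2 * α) * (1 + ((n:ℝ) + k)) ^ (-(2 * α)) := by
        rw [Real.rpow_neg hv.le, Real.rpow_neg hw.le, inv_eq_one_div, inv_eq_one_div,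
          mul_one_div, div_le_div_iff₀ hvp hwp]
        nlinarith [h1]
      rw [show -(2 * α + 1) = -(2 * α) + (-1) by ring, Real.rpow_add hw, Real.rpow_neg_one]
      calc (1 + (k:ℝ)) ^ (-(2 * α)) * (1 + ((n:ℝ) + k))⁻¹
          ≤ ((1 + (n:ℝ)) ^ (2 * α) * (1 + ((n:ℝ) + k)) ^ (-(2 * α))) * (1 + ((n:ℝ) + k))⁻¹ :=
            mul_le_mul_of_nonneg_right key (inv_nonneg.2 hw.le)
        _ = (1 + (n:ℝ)) ^ (2 * α) * ((1 + ((n:ℝ) + k)) ^ (-(2 * α)) * (1 + ((n:ℝ) + k))⁻¹) := by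
            ring
    have hle : (⊤ : ℝ≥0∞) ≤ ∑' n : ℕ,
        ENNReal.ofReal ((1 + (n:ℝ)) ^ (2 * α) * (1 + ((n:ℝ) + k)) ^ (-(2 * α + 1))) := by
      calc (⊤ : ℝ≥0∞) = ENNReal.ofReal ((1 + (k:ℝ)) ^ (-(2 * α))) *
            ∑' n : ℕ, ENNReal.ofReal ((1 + ((n:ℝ) + k))⁻¹) := by
            rw [hdiv, ENNReal.mul_top (ENNReal.ofReal_pos.2 hcpos).ne']
        _ = ∑' n : ℕ, ENNReal.ofReal ((1 + (k:ℝ)) ^ (-(2 * α))) *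
            ENNReal.ofReal ((1 + ((n:ℝ) + k))⁻¹) := ENNReal.tsum_mul_left.symm
        _ ≤ _ := ENNReal.tsum_le_tsum hpt
    exact top_le_iff.1 hle
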